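/- arXiv:2501.12365 — 4 statements merged into one kernel-verified Lean document; each statement's English description precedes it below -/
import Mathlib

section
/- With a nonzero offset d ∈ Z_q added before subsampling, the subsampled Fourier coefficient U_p[j] = (1/B) ∑_{ℓ} f(Mℓ + d) ∏_{m=1}^b ω_{(b)_m}^{-j_m ℓ_m} equals ∑_{k : M^T k = j} F[k] ∏_{i=1}^n ω_{q_i}^{d_i k_i}. -/
open Complex Finset

noncomputable def ch (N : ℕ) (x : ZMod N) : ℂ :=
  Complex.exp (2 * Real.pi * Complex.I * x.val / N)

lemma ch_natCast (N : ℕ) [NeZero N] (a : ℕ) :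
    Complex.exp (2 * Real.pi * Complex.I * a / N) = ch N ((a : ZMod N)) := by
  unfold ch
  rw [ZMod.val_natCast]
  have hN : (N : ℂ) ≠ 0 := Nat.cast_ne_zero.mpr (NeZero.ne N)
  conv_lhs => rw [← Nat.div_add_mod a N]
  push_cast
  rw [show 2 * (Real.pi : ℂ) * Complex.I * ((N : ℂ) * ((a / N : ℕ) : ℂ) + ((a % N : ℕ) : ℂ)) / N
      = ((a / N : ℕ) : ℂ) * (2 * Real.pi * Complex.I) + 2 * Real.pi * Complex.I * ((a % N : ℕ) : ℂ) / N by
    field_simp]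
  rw [Complex.exp_add, Complex.exp_nat_mul_two_pi_mul_I, one_mul]

lemma ch_val_mul (N : ℕ) [NeZero N] (x y : ZMod N) :
    Complex.exp (2 * Real.pi * Complex.I * ((x.val : ℂ) * (y.val : ℂ)) / N) = ch N (x * y) := by
  have h := ch_natCast N (x.val * y.val)
  push_cast at h
  rw [h]
  congr 1
  simp [ZMod.natCast_val, ZMod.cast_id]

lemma ch_zero (N : ℕ) [NeZero N] : ch N 0 = 1 := by
  unfold ch; simp

lemma ch_add (N : ℕ) [NeZero N] (x y : ZMod N) : ch N (x + y) = ch N x * ch N y := by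
  have h := ch_natCast N (x.val + y.val)
  push_cast at h
  rw [show ((x.val : ℕ) : ZMod N) + ((y.val : ℕ) : ZMod N) = x + y by
    simp [ZMod.natCast_val, ZMod.cast_id]] at h
  unfold ch at h ⊢
  rw [← h, ← Complex.exp_add]
  congr 1
  field_simp

lemma ch_neg (N : ℕ) [NeZero N] (x : ZMod N) : ch N (-x) = (ch N x)⁻¹ := by
  have h : ch N x * ch N (-x) = 1 := by rw [← ch_add]; simp [ch_zero]
  exact eq_inv_of_mul_eq_one_left (by rw [mul_comm] at h; exact h)

lemma ch_val_mul_neg (N : ℕ) [NeZero N] (x y : ZMod N) :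
    Complex.exp (-(2 * Real.pi * Complex.I * ((x.val : ℂ) * (y.val : ℂ)) / N)) = ch N (-(x * y)) := by
  rw [ch_neg, ← ch_val_mul, ← Complex.exp_neg]

lemma ch_sum (N : ℕ) [NeZero N] (c : ZMod N) :
    ∑ x : ZMod N, ch N (x * c) = if c = 0 then (N : ℂ) else 0 := by
  have hN : (N : ℂ) ≠ 0 := Nat.cast_ne_zero.mpr (NeZero.ne N)
  set ζ : ℂ := ch N c with hζ
  have hpow : ∀ x : ZMod N, ch N (x * c) = ζ ^ x.val := by
    intro x
    rw [hζ, ← ch_val_mul N x c]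
    unfold ch
    rw [← Complex.exp_nat_mul]
    congr 1
    field_simp
  have hsum : ∑ x : ZMod N, ch N (x * c) = ∑ i ∈ Finset.range N, ζ ^ i := by
    simp_rw [hpow]
    apply Finset.sum_nbij' (fun x : ZMod N => x.val) (fun i : ℕ => (i : ZMod N))
    · intro x _; exact Finset.mem_range.mpr (ZMod.val_lt x)
    · intro i _; exact Finset.mem_univ _
    · intro x _; simp [ZMod.natCast_val, ZMod.cast_id]
    · intro i hi; exact ZMod.val_natCast_of_lt (Finset.mem_range.mp hi)
    · intro x _; rfl
  rw [hsum]
  by_cases hc : c = 0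
  · simp [hc, hζ, ch_zero]
  · rw [if_neg hc]
    have hζN : ζ ^ N = 1 := by
      rw [hζ]; unfold ch
      rw [← Complex.exp_nat_mul]
      rw [show (N : ℂ) * (2 * Real.pi * Complex.I * (c.val : ℂ) / N) = (c.val : ℂ) * (2 * Real.pi * Complex.I) by
        field_simp]
      exact Complex.exp_nat_mul_two_pi_mul_I _
    have hζ1 : ζ ≠ 1 := by
      intro h1
      rw [hζ] at h1
      unfold ch at h1
      rw [Complex.exp_eq_one_iff] at h1
      obtain ⟨m, hm⟩ := h1
      have h2πI : (2 : ℂ) * Real.pi * Complex.I ≠ 0 := by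
        simp [Real.pi_ne_zero, Complex.I_ne_zero]
      have h3 : (2 * (Real.pi:ℂ) * Complex.I) * ((c.val : ℂ) / N) = (2 * (Real.pi:ℂ) * Complex.I) * m := by
        linear_combination hm
      have h4 := mul_left_cancel₀ h2πI h3
      have h5 : (c.val : ℂ) = (m : ℂ) * N := by
        field_simp at h4
        rw [show ((c.val : ℕ) : ℂ) = (ZMod.cast c : ℂ) from ZMod.natCast_val c]
        rw [← ZMod.natCast_val c, h4]; ring
      have h6 : (c.val : ℤ) = m * N := by exact_mod_cast h5
      have hdvd : (N : ℕ) ∣ c.val := by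
        have : (N : ℤ) ∣ (c.val : ℤ) := ⟨m, by linarith [h6]⟩
        exact_mod_cast this
      have hlt := ZMod.val_lt c
      have := Nat.eq_zero_of_dvd_of_lt hdvd hlt
      exact hc ((ZMod.val_eq_zero c).mp this)
    rw [geom_sum_eq hζ1, hζN, sub_self, zero_div]
/-- Aliasing identity with an offset `d`: subsampling `f` at `Mℓ + d` multiplies each
hashed Fourier coefficient by the offset signature `∏ i, ω_{q_i}^{d_i k_i}`. -/
theorem stmt_2 (n b t : ℕ) (ht : t + b ≤ n) (q : Fin n → ℕ) [∀ i, NeZero (q i)]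
    (f F : (∀ i, ZMod (q i)) → ℂ)
    (hf : ∀ m : ∀ i, ZMod (q i), f m =
      ∑ k : ∀ i, ZMod (q i), F k * ∏ i,
        Complex.exp (2 * Real.pi * Complex.I * ((m i).val * (k i).val) / (q i)))
    (sel : Fin b → Fin n) (hsel : ∀ i : Fin b, (sel i : ℕ) = t + i)
    (emb : (∀ i : Fin b, ZMod (q (sel i))) → (∀ i : Fin n, ZMod (q i)))
    (hemb : ∀ ℓ, (∀ i : Fin b, emb ℓ (sel i) = ℓ i) ∧
      (∀ i' : Fin n, (∀ i : Fin b, sel i ≠ i') → emb ℓ i' = 0))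
    (B : ℕ) (hB : B = ∏ i : Fin b, q (sel i))
    (d : ∀ i, ZMod (q i))
    (j : ∀ i : Fin b, ZMod (q (sel i))) :
    (1 / (B : ℂ)) * ∑ ℓ : ∀ i : Fin b, ZMod (q (sel i)), f (emb ℓ + d) *
        ∏ m : Fin b,
          Complex.exp (-(2 * Real.pi * Complex.I * ((j m).val * (ℓ m).val) / (q (sel m))))
    = ∑ k ∈ Finset.univ.filter (fun k : ∀ i, ZMod (q i) => ∀ i : Fin b, k (sel i) = j i),
        F k * ∏ i,
          Complex.exp (2 * Real.pi * Complex.I * ((d i).val * (k i).val) / (q i)) := by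
  have hBne : (B : ℂ) ≠ 0 := by
    rw [hB]
    push_cast
    exact Finset.prod_ne_zero_iff.mpr
      (fun i _ => Nat.cast_ne_zero.mpr (NeZero.ne _))
  have hinj : Function.Injective sel := by
    intro a a' h
    have h1 := hsel a
    have h2 := hsel a'
    have : (sel a : ℕ) = (sel a' : ℕ) := by rw [h]
    apply Fin.ext
    omega
  simp_rw [hf, ch_val_mul, ch_val_mul_neg, Pi.add_apply, add_mul, ch_add,
    Finset.prod_mul_distrib]
  have hprod : ∀ (ℓ : ∀ i : Fin b, ZMod (q (sel i))) (k : ∀ i, ZMod (q i)),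
      (∏ i, ch (q i) (emb ℓ i * k i)) = ∏ m, ch (q (sel m)) (ℓ m * k (sel m)) := by
    intro ℓ k
    symm
    calc ∏ m, ch (q (sel m)) (ℓ m * k (sel m))
        = ∏ m, ch (q (sel m)) (emb ℓ (sel m) * k (sel m)) :=
          Finset.prod_congr rfl (fun m _ => by rw [(hemb ℓ).1 m])
      _ = ∏ i ∈ Finset.univ.image sel, ch (q i) (emb ℓ i * k i) :=
          (Finset.prod_image (f := fun i => ch (q i) (emb ℓ i * k i)) (g := sel)
            (fun x _ y _ h => hinj h)).symm
      _ = ∏ i, ch (q i) (emb ℓ i * k i) := by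
          apply Finset.prod_subset (Finset.subset_univ _)
          intro i _ hi
          have h0 : emb ℓ i = 0 := (hemb ℓ).2 i
            (fun m hm => hi (Finset.mem_image.mpr ⟨m, Finset.mem_univ m, hm⟩))
          rw [h0, zero_mul, ch_zero]
  simp_rw [hprod, Finset.sum_mul]
  rw [Finset.sum_comm]
  have key : ∀ k : ∀ i, ZMod (q i),
      ∑ ℓ : ∀ i : Fin b, ZMod (q (sel i)),
        F k * ((∏ m, ch (q (sel m)) (ℓ m * k (sel m))) * ∏ i, ch (q i) (d i * k i)) *
          ∏ m, ch (q (sel m)) (-(j m * ℓ m))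
      = F k * (∏ i, ch (q i) (d i * k i)) *
          (if ∀ m : Fin b, k (sel m) = j m then (B : ℂ) else 0) := by
    intro k
    calc ∑ ℓ : ∀ i : Fin b, ZMod (q (sel i)),
          F k * ((∏ m, ch (q (sel m)) (ℓ m * k (sel m))) * ∏ i, ch (q i) (d i * k i)) *
            ∏ m, ch (q (sel m)) (-(j m * ℓ m))
        = F k * (∏ i, ch (q i) (d i * k i)) *
            ∑ ℓ : ∀ i : Fin b, ZMod (q (sel i)),
              ∏ m, ch (q (sel m)) (ℓ m * (k (sel m) - j m)) := by
          rw [Finset.mul_sum]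
          refine Finset.sum_congr rfl fun ℓ _ => ?_
          have : ∀ m : Fin b, ch (q (sel m)) (ℓ m * (k (sel m) - j m))
              = ch (q (sel m)) (ℓ m * k (sel m)) * ch (q (sel m)) (-(j m * ℓ m)) := by
            intro m
            rw [← ch_add]
            congr 1
            ring
          simp_rw [this, Finset.prod_mul_distrib]
          ring
      _ = F k * (∏ i, ch (q i) (d i * k i)) *
            ∏ m, ∑ x : ZMod (q (sel m)), ch (q (sel m)) (x * (k (sel m) - j m)) := by
          rw [Fintype.prod_sum (f := fun (m : Fin b) (x : ZMod (q (sel m))) =>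
            ch (q (sel m)) (x * (k (sel m) - j m)))]
      _ = F k * (∏ i, ch (q i) (d i * k i)) *
            (if ∀ m : Fin b, k (sel m) = j m then (B : ℂ) else 0) := by
          congr 1
          simp_rw [ch_sum]
          by_cases hk : ∀ m : Fin b, k (sel m) = j m
          · rw [if_pos hk, hB]
            push_cast
            refine Finset.prod_congr rfl fun m _ => ?_
            rw [if_pos (by rw [hk m, sub_self])]
          · rw [if_neg hk]
            obtain ⟨m, hm⟩ := not_forall.mp hk
            exact Finset.prod_eq_zero (Finset.mem_univ m)
              (by rw [if_neg (fun h => hm (by rwa [sub_eq_zero] at h))])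
  rw [Finset.sum_congr rfl fun k _ => key k]
  simp_rw [mul_ite, mul_zero]
  rw [← Finset.sum_filter]
  rw [← Finset.sum_mul]
  field_simp
end

section
/- If the subsampled coefficients satisfy U_{c,0}[j] = ∑_{k: M^T k = j} F[k] and U_{c,p}[j] = ∑_{k: M^T k = j} F[k] ω_{q_p}^{k_p} for offsets given by the identity matrix, and exactly one k with M^T k = j has F[k] ≠ 0, then |U_{c,p}[j]/U_{c,0}[j]| = 1 for all p = 1,…,n. -/
open Complex Finset

/-- Singleton verification in the noiseless case: if exactly one `k` hashed to bin `j`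
has a nonzero Fourier coefficient, then `|U_{c,p}[j] / U_{c,0}[j]| = 1` for all `p`. -/
theorem stmt_3 (n b : ℕ) (q : Fin n → ℕ) [∀ i, NeZero (q i)]
    (F : (∀ i, ZMod (q i)) → ℂ)
    (sel : Fin b → Fin n)
    (j : ∀ i : Fin b, ZMod (q (sel i)))
    (hsingle : ∃! k : ∀ i, ZMod (q i), (∀ i : Fin b, k (sel i) = j i) ∧ F k ≠ 0)
    (U0 : ℂ) (U : Fin n → ℂ)
    (hU0 : U0 = ∑ k ∈ Finset.univ.filter
        (fun k : ∀ i, ZMod (q i) => ∀ i : Fin b, k (sel i) = j i), F k)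
    (hU : ∀ p : Fin n, U p = ∑ k ∈ Finset.univ.filter
        (fun k : ∀ i, ZMod (q i) => ∀ i : Fin b, k (sel i) = j i),
        F k * Complex.exp (2 * Real.pi * Complex.I * ((k p).val) / (q p))) :
    ∀ p : Fin n, ‖U p / U0‖ = 1 := by
  obtain ⟨k0, ⟨hk0h, hk0ne⟩, huniq⟩ := hsingle
  have hmem : k0 ∈ Finset.univ.filter
      (fun k : ∀ i, ZMod (q i) => ∀ i : Fin b, k (sel i) = j i) := by
    simp [hk0h]
  have hzero : ∀ k ∈ Finset.univ.filter
      (fun k : ∀ i, ZMod (q i) => ∀ i : Fin b, k (sel i) = j i), k ≠ k0 → F k = 0 := by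
    intro k hk hne
    by_contra hF
    exact hne (huniq k ⟨(Finset.mem_filter.mp hk).2, hF⟩)
  have hU0' : U0 = F k0 := by
    rw [hU0]
    exact Finset.sum_eq_single_of_mem k0 hmem hzero
  intro p
  have hUp : U p = F k0 * Complex.exp (2 * Real.pi * Complex.I * ((k0 p).val) / (q p)) := by
    rw [hU p]
    exact Finset.sum_eq_single_of_mem k0 hmem (fun k hk hne => by rw [hzero k hk hne, zero_mul])
  have hexp : (2 * Real.pi * Complex.I * ((k0 p).val) / (q p) : ℂ)
      = ((2 * Real.pi * ((k0 p).val) / (q p) : ℝ) : ℂ) * Complex.I := by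
    push_cast
    ring
  rw [hUp, hU0', mul_comm, mul_div_assoc, div_self hk0ne, mul_one, hexp,
    Complex.norm_exp_ofReal_mul_I]
end

section
/- Let s, s' ∈ ℂ^P be vectors whose p-th entries are ∏_{i=1}^n ω_{q_i}^{d_{p,i} k_i} and ∏_{i=1}^n ω_{q_i}^{d_{p,i} m_i} respectively, where each offset row d_p is drawn uniformly at random from Z_q and k ≠ m in Z_q. Then each entry of the coordinatewise product y_p = conj(s'_p) s_p has expectation 0, and for any μ₀ > 0, Pr(|⟨s', s⟩|/P ≥ μ₀) ≤ 4 exp(−μ₀² P / 8). -/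
open Complex Finset


lemma aux_root_sum (Q c : ℕ) [NeZero Q] (hc : 0 < c) (hcq : c < Q) :
    ∑ d : ZMod Q, Complex.exp (2 * Real.pi * Complex.I * ((d.val : ℂ) * (c : ℂ)) / Q) = 0 := by
  have hQpos : 0 < Q := hc.trans hcq
  have hQ0 : (Q : ℂ) ≠ 0 := Nat.cast_ne_zero.mpr (NeZero.ne Q)
  set ζ : ℂ := Complex.exp (2 * Real.pi * Complex.I * c / Q) with hζ
  have hterm : ∀ d : ZMod Q,
      Complex.exp (2 * Real.pi * Complex.I * ((d.val : ℂ) * (c : ℂ)) / Q) = ζ ^ d.val := by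
    intro d
    rw [hζ, ← Complex.exp_nat_mul]
    ring_nf
  simp only [hterm]
  have hbij : ∑ d : ZMod Q, ζ ^ d.val = ∑ j ∈ Finset.range Q, ζ ^ j := by
    refine Finset.sum_nbij' (fun d => d.val) (fun j => (j : ZMod Q)) ?_ ?_ ?_ ?_ ?_
    · intro d _; exact Finset.mem_range.mpr d.val_lt
    · intro j _; exact Finset.mem_univ _
    · intro d _; exact ZMod.natCast_rightInverse d
    · intro j hj; exact ZMod.val_cast_of_lt (Finset.mem_range.mp hj)
    · intro d _; rfl
  rw [hbij]
  have hζQ : ζ ^ Q = 1 := by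
    rw [hζ, ← Complex.exp_nat_mul]
    have h1 : (Q : ℂ) * (2 * Real.pi * Complex.I * c / Q) = c * (2 * Real.pi * Complex.I) := by
      field_simp
    rw [h1]
    exact_mod_cast Complex.exp_int_mul_two_pi_mul_I (c : ℤ)
  have hζ1 : ζ ≠ 1 := by
    rw [hζ]
    intro h
    rw [Complex.exp_eq_one_iff] at h
    obtain ⟨N, hN⟩ := h
    have h2pi : (2 * (Real.pi : ℂ) * Complex.I) ≠ 0 := by
      simp [Real.pi_ne_zero, Complex.I_ne_zero]
    have hcqN : (c : ℂ) = N * Q := by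
      field_simp at hN
      have h3 : (c : ℂ) * (2 * (Real.pi : ℂ) * Complex.I) =
          (N * Q) * (2 * (Real.pi : ℂ) * Complex.I) := by linear_combination (2 * (Real.pi : ℂ) * Complex.I) * hN
      exact mul_right_cancel₀ h2pi h3
    have hre : (c : ℝ) = (N : ℝ) * Q := by exact_mod_cast congrArg Complex.re hcqN
    have h0 : (0 : ℝ) < (N : ℝ) * Q := by rw [← hre]; exact_mod_cast hc
    have h1 : (N : ℝ) * Q < 1 * Q := by rw [← hre, one_mul]; exact_mod_cast hcq
    have hQR : (0 : ℝ) < Q := by exact_mod_cast hQpos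
    have hNlt : (N : ℝ) < 1 := by
      have := lt_of_mul_lt_mul_right h1 hQR.le; exact this
    have hNpos : (0 : ℝ) < (N : ℝ) := by nlinarith
    have hN1 : (0 : ℤ) < N := by exact_mod_cast hNpos
    have : (1 : ℝ) ≤ (N : ℝ) := by exact_mod_cast hN1
    linarith
  rw [geom_sum_eq hζ1, hζQ]
  simp

lemma aux_pt (L x : ℝ) (hx : |x| ≤ 1) :
    Real.exp (L * x) ≤ Real.cosh L + x * Real.sinh L := by
  obtain ⟨h1, h2⟩ := abs_le.mp hx
  have hc := convexOn_exp.2 (Set.mem_univ (-L)) (Set.mem_univ L)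
    (by linarith : (0:ℝ) ≤ (1 - x)/2) (by linarith : (0:ℝ) ≤ (1 + x)/2) (by ring)
  simp only [smul_eq_mul] at hc
  have e : (1 - x)/2 * (-L) + (1 + x)/2 * L = L * x := by ring
  rw [e] at hc
  calc Real.exp (L * x) ≤ (1 - x)/2 * Real.exp (-L) + (1 + x)/2 * Real.exp L := hc
    _ = Real.cosh L + x * Real.sinh L := by rw [Real.cosh_eq, Real.sinh_eq]; ring

lemma aux_chernoff {Ω : Type*} [Fintype Ω] (P : ℕ) (f : Ω → ℝ)
    (hb : ∀ ω, |f ω| ≤ 1) (h0 : ∑ ω, f ω = 0) (a L : ℝ) (hL : 0 ≤ L) :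
    ((Finset.univ.filter (fun D : Fin P → Ω => a ≤ ∑ p, f (D p))).card : ℝ)
      ≤ (Fintype.card Ω : ℝ) ^ P * Real.exp (P * L ^ 2 / 2 - L * a) := by
  classical
  set N : ℝ := (Fintype.card Ω : ℝ)
  have hN0 : 0 ≤ N := Nat.cast_nonneg _
  have step1 : ((Finset.univ.filter (fun D : Fin P → Ω => a ≤ ∑ p, f (D p))).card : ℝ)
      ≤ ∑ D : Fin P → Ω, Real.exp (L * (∑ p, f (D p)) - L * a) := by
    rw [Finset.card_filter]
    push_cast
    refine Finset.sum_le_sum fun D _ => ?_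
    by_cases h : a ≤ ∑ p, f (D p)
    · simp only [if_pos h]
      exact Real.one_le_exp (by nlinarith)
    · simp only [if_neg h]
      positivity
  have step2 : ∑ D : Fin P → Ω, Real.exp (L * (∑ p, f (D p)) - L * a)
      = Real.exp (-(L * a)) * (∑ ω, Real.exp (L * f ω)) ^ P := by
    rw [Fintype.sum_pow, Finset.mul_sum]
    refine Finset.sum_congr rfl fun D _ => ?_
    rw [← Real.exp_sum]
    rw [← Real.exp_add]
    congr 1
    rw [Finset.mul_sum]
    ring
  have step3 : ∑ ω, Real.exp (L * f ω) ≤ N * Real.exp (L ^ 2 / 2) := by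
    calc ∑ ω, Real.exp (L * f ω) ≤ ∑ ω, (Real.cosh L + f ω * Real.sinh L) :=
          Finset.sum_le_sum fun ω _ => aux_pt L (f ω) (hb ω)
      _ = N * Real.cosh L + (∑ ω, f ω) * Real.sinh L := by
          rw [Finset.sum_add_distrib, ← Finset.sum_mul]
          simp [N, mul_comm]
      _ = N * Real.cosh L := by rw [h0]; ring
      _ ≤ N * Real.exp (L ^ 2 / 2) :=
          mul_le_mul_of_nonneg_left (Real.cosh_le_exp_half_sq L) hN0
  calc ((Finset.univ.filter (fun D : Fin P → Ω => a ≤ ∑ p, f (D p))).card : ℝ)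
      ≤ Real.exp (-(L * a)) * (∑ ω, Real.exp (L * f ω)) ^ P := by rw [← step2]; exact step1
    _ ≤ Real.exp (-(L * a)) * (N * Real.exp (L ^ 2 / 2)) ^ P := by
        refine mul_le_mul_of_nonneg_left (pow_le_pow_left₀ ?_ step3 P) (Real.exp_pos _).le
        exact Finset.sum_nonneg fun ω _ => (Real.exp_pos _).le
    _ = N ^ P * (Real.exp (-(L * a)) * Real.exp (P * (L ^ 2 / 2))) := by
        rw [mul_pow, ← Real.exp_nat_mul]; ring
    _ = N ^ P * Real.exp (P * L ^ 2 / 2 - L * a) := by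
        rw [← Real.exp_add]; ring_nf

lemma aux_mean_zero (n : ℕ) (q : Fin n → ℕ) [∀ i, NeZero (q i)]
    (k m : ∀ i, ZMod (q i)) (hkm : k ≠ m) :
    (∑ dvec : ∀ i, ZMod (q i), ∏ i,
        Complex.exp (2 * Real.pi * Complex.I *
          ((dvec i).val * ((k i - m i).val)) / (q i))) = 0 := by
  classical
  obtain ⟨i₀, hi₀⟩ : ∃ i, k i ≠ m i := by
    by_contra h; push_neg at h; exact hkm (funext h)
  set g : ∀ i : Fin n, ZMod (q i) → ℂ := fun i d =>
    Complex.exp (2 * Real.pi * Complex.I * ((d.val : ℂ) * (((k i - m i).val : ℕ) : ℂ)) / (q i))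
    with hgdef
  have hc : 0 < ((k i₀ - m i₀).val) := by
    rcases Nat.eq_zero_or_pos ((k i₀ - m i₀).val) with h | h
    · exact absurd (sub_eq_zero.mp ((ZMod.val_eq_zero _).mp h)) hi₀
    · exact h
  calc (∑ dvec : ∀ i, ZMod (q i), ∏ i,
        Complex.exp (2 * Real.pi * Complex.I *
          ((dvec i).val * ((k i - m i).val)) / (q i)))
      = ∏ i, ∑ d : ZMod (q i), g i d := (Fintype.prod_sum g).symm
    _ = 0 := Finset.prod_eq_zero (Finset.mem_univ i₀)
        (aux_root_sum (q i₀) ((k i₀ - m i₀).val) hc (ZMod.val_lt _))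

set_option maxHeartbeats 1000000 in

/-- Offset signatures of distinct indices are uncorrelated: each entry of
`y_p = conj(s'_p)·s_p` has zero mean under a uniform random offset, and the normalized
inner product of the signature vectors satisfies a Hoeffding-type tail bound. -/
theorem stmt_12 (n P : ℕ) (hP : 0 < P) (q : Fin n → ℕ) [∀ i, NeZero (q i)]
    (hq : ∀ i, 2 ≤ q i)
    (k m : ∀ i, ZMod (q i)) (hkm : k ≠ m) (μ₀ : ℝ) (hμ₀ : 0 < μ₀) :
    -- mean-zero: the expectation of y over a uniform offset vector is 0
    ((∑ dvec : ∀ i, ZMod (q i), ∏ i,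
        Complex.exp (2 * Real.pi * Complex.I *
          ((dvec i).val * ((k i - m i).val)) / (q i))) = 0)
    -- Hoeffding bound over i.i.d. uniform offset rows d_1, …, d_P
    ∧ ((Finset.univ.filter (fun D : Fin P → ∀ i, ZMod (q i) =>
          μ₀ ≤ ‖∑ p : Fin P, ∏ i,
            Complex.exp (2 * Real.pi * Complex.I *
              (((D p) i).val * ((k i - m i).val)) / (q i))‖ / P)).card : ℝ)
        / (Fintype.card (Fin P → ∀ i, ZMod (q i)) : ℝ)
      ≤ 4 * Real.exp (-(μ₀ ^ 2) * P / 8) := by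
  classical
  have hmean := aux_mean_zero n q k m hkm
  refine ⟨hmean, ?_⟩
  set y : (∀ i, ZMod (q i)) → ℂ := fun ω => ∏ i,
    Complex.exp (2 * Real.pi * Complex.I * ((ω i).val * ((k i - m i).val)) / (q i)) with hydef
  have hy0 : ∑ ω : ∀ i, ZMod (q i), y ω = 0 := hmean
  have hy : ∀ ω : ∀ i, ZMod (q i), ‖y ω‖ = 1 := by
    intro ω
    rw [hydef]
    simp only
    rw [norm_prod]
    refine Finset.prod_eq_one fun i _ => ?_
    rw [Complex.norm_exp]
    have h : (2 * (Real.pi : ℂ) * Complex.I *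
        ((((ω i).val : ℕ) : ℂ) * (((k i - m i).val : ℕ) : ℂ)) / (q i))
        = ((2 * Real.pi * (((ω i).val : ℕ) * (((k i - m i).val : ℕ)) : ℝ) / (q i) : ℝ) : ℂ)
          * Complex.I := by
      push_cast; ring
    rw [h]
    simp
  set aa : ℝ := μ₀ * P / Real.sqrt 2 with haa
  set LL : ℝ := μ₀ / Real.sqrt 2 with hLL
  have hs2 : Real.sqrt 2 * Real.sqrt 2 = 2 := Real.mul_self_sqrt (by norm_num)
  have hs2pos : 0 < Real.sqrt 2 := Real.sqrt_pos.mpr (by norm_num)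
  have hPpos : (0 : ℝ) < P := by exact_mod_cast hP
  have key : ∀ f : (∀ i, ZMod (q i)) → ℝ, (∀ ω, |f ω| ≤ 1) → (∑ ω, f ω = 0) →
      ((Finset.univ.filter (fun D : Fin P → ∀ i, ZMod (q i) =>
          aa ≤ ∑ p, f (D p))).card : ℝ)
        ≤ (Fintype.card (∀ i, ZMod (q i)) : ℝ) ^ P * Real.exp (-(μ₀ ^ 2) * P / 8) := by
    intro f hb h0
    refine (aux_chernoff P f hb h0 aa LL (by positivity)).trans ?_
    refine mul_le_mul_of_nonneg_left (Real.exp_le_exp.mpr ?_) (by positivity)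
    have hLL2 : LL ^ 2 = μ₀ ^ 2 / 2 := by
      rw [hLL, div_pow, sq (Real.sqrt 2), hs2]
    have hLa : LL * aa = μ₀ ^ 2 * P / 2 := by
      rw [hLL, haa, div_mul_div_comm, hs2]; ring
    rw [hLL2, hLa]
    nlinarith [sq_nonneg μ₀, hPpos]
  have hb1 : ∀ ω, |(y ω).re| ≤ 1 := fun ω => by
    simpa [hy ω] using Complex.abs_re_le_norm (y ω)
  have hb2 : ∀ ω, |(y ω).im| ≤ 1 := fun ω => by
    simpa [hy ω] using Complex.abs_im_le_norm (y ω)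
  have hsum_re : ∑ ω, (y ω).re = 0 := by rw [← Complex.re_sum, hy0]; simp
  have hsum_im : ∑ ω, (y ω).im = 0 := by rw [← Complex.im_sum, hy0]; simp
  set E := Finset.univ.filter (fun D : Fin P → ∀ i, ZMod (q i) =>
      μ₀ ≤ ‖∑ p : Fin P, ∏ i,
        Complex.exp (2 * Real.pi * Complex.I *
          (((D p) i).val * ((k i - m i).val)) / (q i))‖ / P) with hE
  set E1 := Finset.univ.filter (fun D : Fin P → ∀ i, ZMod (q i) =>
      aa ≤ ∑ p, (y (D p)).re) with hE1
  set E2 := Finset.univ.filter (fun D : Fin P → ∀ i, ZMod (q i) =>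
      aa ≤ ∑ p, -(y (D p)).re) with hE2
  set E3 := Finset.univ.filter (fun D : Fin P → ∀ i, ZMod (q i) =>
      aa ≤ ∑ p, (y (D p)).im) with hE3
  set E4 := Finset.univ.filter (fun D : Fin P → ∀ i, ZMod (q i) =>
      aa ≤ ∑ p, -(y (D p)).im) with hE4
  have k1 : (E1.card : ℝ) ≤ (Fintype.card (∀ i, ZMod (q i)) : ℝ) ^ P
      * Real.exp (-(μ₀ ^ 2) * P / 8) := key (fun ω => (y ω).re) hb1 hsum_re
  have k2 : (E2.card : ℝ) ≤ (Fintype.card (∀ i, ZMod (q i)) : ℝ) ^ P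
      * Real.exp (-(μ₀ ^ 2) * P / 8) := key (fun ω => -(y ω).re)
      (fun ω => by simpa using hb1 ω) (by simpa using neg_eq_zero.mpr hsum_re)
  have k3 : (E3.card : ℝ) ≤ (Fintype.card (∀ i, ZMod (q i)) : ℝ) ^ P
      * Real.exp (-(μ₀ ^ 2) * P / 8) := key (fun ω => (y ω).im) hb2 hsum_im
  have k4 : (E4.card : ℝ) ≤ (Fintype.card (∀ i, ZMod (q i)) : ℝ) ^ P
      * Real.exp (-(μ₀ ^ 2) * P / 8) := key (fun ω => -(y ω).im)
      (fun ω => by simpa using hb2 ω) (by simpa using neg_eq_zero.mpr hsum_im)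
  have hsub : E ⊆ E1 ∪ E2 ∪ E3 ∪ E4 := by
    intro D hD
    rw [hE, Finset.mem_filter] at hD
    have hDS : μ₀ ≤ ‖∑ p, y (D p)‖ / P := hD.2
    have habs : μ₀ * P ≤ ‖∑ p, y (D p)‖ := by
      rw [le_div_iff₀ hPpos] at hDS; exact hDS
    set S := ∑ p, y (D p) with hS
    have hsq : (μ₀ * P) ^ 2 ≤ S.re ^ 2 + S.im ^ 2 := by
      have h1 : (μ₀ * P) ^ 2 ≤ ‖S‖ ^ 2 :=
        pow_le_pow_left₀ (by positivity) habs 2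
      rwa [Complex.sq_norm, Complex.normSq_apply, ← sq, ← sq] at h1
    have haa2 : aa ^ 2 = (μ₀ * P) ^ 2 / 2 := by
      rw [haa, div_pow, sq (Real.sqrt 2), hs2]
    have hcase : aa ^ 2 ≤ S.re ^ 2 ∨ aa ^ 2 ≤ S.im ^ 2 := by
      by_contra h
      push_neg at h
      rw [haa2] at h
      nlinarith [h.1, h.2, hsq]
    have haann : 0 ≤ aa := by positivity
    have habs_of : ∀ r : ℝ, aa ^ 2 ≤ r ^ 2 → aa ≤ |r| := by
      intro r hr
      rw [← Real.sqrt_sq haann, ← Real.sqrt_sq_eq_abs]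
      exact Real.sqrt_le_sqrt hr
    have hre_sum : ∑ p, (y (D p)).re = S.re := by rw [hS, Complex.re_sum]
    have him_sum : ∑ p, (y (D p)).im = S.im := by rw [hS, Complex.im_sum]
    simp only [Finset.mem_union, hE1, hE2, hE3, hE4, Finset.mem_filter, Finset.mem_univ,
      true_and]
    rcases hcase with h | h
    · rcases le_abs.mp (habs_of _ h) with h' | h'
      · exact Or.inl (Or.inl (Or.inl (by rw [hre_sum]; exact h')))
      · refine Or.inl (Or.inl (Or.inr ?_))
        rw [Finset.sum_neg_distrib, hre_sum]; linarith
    · rcases le_abs.mp (habs_of _ h) with h' | h'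
      · exact Or.inl (Or.inr (by rw [him_sum]; exact h'))
      · refine Or.inr ?_
        rw [Finset.sum_neg_distrib, him_sum]; linarith
  have hcard : (E.card : ℝ) ≤ (E1.card : ℝ) + E2.card + E3.card + E4.card := by
    have h1 := Finset.card_le_card hsub
    have h2 := Finset.card_union_le (E1 ∪ E2 ∪ E3) E4
    have h3 := Finset.card_union_le (E1 ∪ E2) E3
    have h4 := Finset.card_union_le E1 E2
    have : E.card ≤ E1.card + E2.card + E3.card + E4.card := by omega
    exact_mod_cast this
  have hT : ((Fintype.card (Fin P → ∀ i, ZMod (q i))) : ℝ)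
      = (Fintype.card (∀ i, ZMod (q i)) : ℝ) ^ P := by
    rw [Fintype.card_fun, Fintype.card_fin]
    push_cast
    ring
  have hTpos : (0 : ℝ) < (Fintype.card (Fin P → ∀ i, ZMod (q i)) : ℝ) := by
    have : Nonempty (Fin P → ∀ i, ZMod (q i)) := ⟨fun _ _ => 0⟩
    exact_mod_cast Fintype.card_pos
  rw [div_le_iff₀ hTpos]
  calc (E.card : ℝ) ≤ (E1.card : ℝ) + E2.card + E3.card + E4.card := hcard
    _ ≤ 4 * ((Fintype.card (∀ i, ZMod (q i)) : ℝ) ^ P * Real.exp (-(μ₀ ^ 2) * P / 8)) := by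
        linarith
    _ = 4 * Real.exp (-(μ₀ ^ 2) * P / 8) * (Fintype.card (Fin P → ∀ i, ZMod (q i)) : ℝ) := by
        rw [hT]; ring
end

section
/- Multinomial concentration: let Z_1, …, Z_P be i.i.d. random variables on {0, 1, …, q−1} with distribution p = (p_0, …, p_{q−1}), and let p̂ be the empirical distribution (p̂_a = (1/P)·#{p : Z_p = a}). Then Pr(‖p − p̂‖₂ ≥ ε) ≤ 2 exp(−ε² P / (2q)). Consequently, if p_0 − p_i ≥ ε for all i ≠ 0, the probability that the empirical mode (argmax_a p̂_a) differs from 0 is at most 2 exp(−ε² P / (2q)). -/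
open Finset Real


/-- Bernoulli mgf bound (Hoeffding-type, constant 1/4). -/
lemma bern_mgf {r lam : ℝ} (hr0 : 0 ≤ r) (hr1 : r ≤ 1) (hl : 0 ≤ lam) :
    1 - r + r * Real.exp lam ≤ Real.exp (lam * r + lam ^ 2 / 4) := by
  set D : ℝ → ℝ := fun t => 1 - r + r * Real.exp t with hDdef
  have hD : ∀ t, 0 < D t := by
    intro t
    rcases eq_or_lt_of_le hr0 with h | h
    · simp [hDdef, ← h]
    · have := Real.exp_pos t
      have : 0 < r * Real.exp t := by positivity
      simp only [hDdef]; linarith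
  have hDd : ∀ t : ℝ, HasDerivAt D (r * Real.exp t) t := by
    intro t
    exact ((Real.hasDerivAt_exp t).const_mul r).const_add (1 - r)
  -- G is the derivative of F
  set G : ℝ → ℝ := fun t => r + t / 2 - r * Real.exp t / D t with hGdef
  have hGd : ∀ t : ℝ, HasDerivAt G
      (1 / 2 - (r * Real.exp t * D t - r * Real.exp t * (r * Real.exp t)) / (D t) ^ 2) t := by
    intro t
    have h1 : HasDerivAt (fun t : ℝ => r * Real.exp t) (r * Real.exp t) t :=
      (Real.hasDerivAt_exp t).const_mul r
    have h2 : HasDerivAt (fun t : ℝ => r * Real.exp t / D t)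
        ((r * Real.exp t * D t - r * Real.exp t * (r * Real.exp t)) / (D t) ^ 2) t :=
      h1.div (hDd t) (hD t).ne'
    have h3 : HasDerivAt (fun t : ℝ => r + t / 2) (1 / 2) t := by
      simpa using ((hasDerivAt_id t).div_const 2).const_add r
    exact h3.sub h2
  have hG0 : G 0 = 0 := by simp [hGdef, hDdef]
  have hGderiv_nonneg : ∀ t : ℝ, 0 ≤ (1 / 2 -
      (r * Real.exp t * D t - r * Real.exp t * (r * Real.exp t)) / (D t) ^ 2) := by
    intro t
    have hd := hD t
    have hv : 0 ≤ r * Real.exp t := by positivity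
    have hvd : r * Real.exp t ≤ D t := by simp only [hDdef]; linarith
    rw [sub_nonneg, div_le_iff₀ (by positivity)]
    nlinarith [sq_nonneg (2 * (r * Real.exp t) - D t)]
  have hGmono : Monotone G :=
    monotone_of_deriv_nonneg (fun t => (hGd t).differentiableAt)
      (fun t => by rw [(hGd t).deriv]; exact hGderiv_nonneg t)
  have hGnonneg : ∀ t : ℝ, 0 ≤ t → 0 ≤ G t := fun t ht => hG0 ▸ hGmono ht
  -- F
  set F : ℝ → ℝ := fun t => t * r + t ^ 2 / 4 - Real.log (D t) with hFdef
  have hFd : ∀ t : ℝ, HasDerivAt F (G t) t := by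
    intro t
    have h1 : HasDerivAt (fun t : ℝ => Real.log (D t)) (r * Real.exp t / D t) t :=
      (hDd t).log (hD t).ne'
    have h2 : HasDerivAt (fun t : ℝ => t * r + t ^ 2 / 4) (r + t / 2) t := by
      have := ((hasDerivAt_pow 2 t).div_const 4).const_add 0
      have h3 : HasDerivAt (fun t : ℝ => t * r) r t := by simpa using (hasDerivAt_id t).mul_const r
      have h4 : HasDerivAt (fun t : ℝ => t ^ 2 / 4) (t / 2) t := by
        have := (hasDerivAt_pow 2 t).div_const 4
        exact this.congr_deriv (by norm_num; ring)
      exact h3.add h4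
    exact h2.sub h1
  have hF0 : F 0 = 0 := by simp [hFdef, hDdef]
  have hFmono : MonotoneOn F (Set.Ici (0:ℝ)) := by
    apply monotoneOn_of_deriv_nonneg (convex_Ici 0)
      (fun t _ => (hFd t).differentiableAt.continuousAt.continuousWithinAt)
      (fun t _ => (hFd t).differentiableAt.differentiableWithinAt)
    intro t ht
    rw [(hFd t).deriv]
    exact hGnonneg t (le_of_lt (by simpa using ht))
  have hFl : 0 ≤ F lam := by
    have := hFmono (Set.self_mem_Ici) (Set.mem_Ici.mpr hl) hl
    rw [hF0] at this; exact this
  have : Real.log (D lam) ≤ lam * r + lam ^ 2 / 4 := by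
    simp only [hFdef] at hFl; linarith
  calc 1 - r + r * Real.exp lam = D lam := rfl
    _ ≤ Real.exp (lam * r + lam ^ 2 / 4) := by
        rw [← Real.exp_log (hD lam)]; exact Real.exp_le_exp.mpr this

/-- Finite Chernoff bound. -/
lemma chernoff {q P : ℕ} (p : Fin q → ℝ) (hp0 : ∀ a, 0 ≤ p a)
    (f : Fin q → ℝ) (c lam : ℝ) (hl : 0 ≤ lam) :
    ∑ ω ∈ Finset.univ.filter (fun ω : Fin P → Fin q => c ≤ ∑ t, f (ω t)), ∏ t, p (ω t)
      ≤ Real.exp (-lam * c) * (∑ a, p a * Real.exp (lam * f a)) ^ P := by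
  classical
  have key : ∀ ω : Fin P → Fin q, ω ∈ Finset.univ.filter
        (fun ω : Fin P → Fin q => c ≤ ∑ t, f (ω t)) →
      ∏ t, p (ω t) ≤ Real.exp (-lam * c) * ∏ t, (p (ω t) * Real.exp (lam * f (ω t))) := by
    intro ω hω
    have hc : c ≤ ∑ t, f (ω t) := (Finset.mem_filter.mp hω).2
    have : ∏ t, (p (ω t) * Real.exp (lam * f (ω t)))
        = (∏ t, p (ω t)) * Real.exp (lam * ∑ t, f (ω t)) := by
      rw [Finset.prod_mul_distrib, ← Real.exp_sum]
      congr 1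
      rw [Finset.mul_sum]
    rw [this, ← mul_assoc, mul_comm (Real.exp (-lam * c)), mul_assoc]
    nth_rewrite 1 [← mul_one (∏ t, p (ω t))]
    apply mul_le_mul_of_nonneg_left _ (Finset.prod_nonneg fun t _ => hp0 _)
    rw [← Real.exp_add]
    apply Real.one_le_exp
    nlinarith
  calc ∑ ω ∈ Finset.univ.filter (fun ω : Fin P → Fin q => c ≤ ∑ t, f (ω t)), ∏ t, p (ω t)
      ≤ ∑ ω ∈ Finset.univ.filter (fun ω : Fin P → Fin q => c ≤ ∑ t, f (ω t)),
          Real.exp (-lam * c) * ∏ t, (p (ω t) * Real.exp (lam * f (ω t))) :=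
        Finset.sum_le_sum key
    _ ≤ ∑ ω : Fin P → Fin q,
          Real.exp ((-lam) * c) * ∏ t, (p (ω t) * Real.exp (lam * f (ω t))) := by
        apply Finset.sum_le_sum_of_subset_of_nonneg (Finset.filter_subset _ _)
        intro ω _ _
        exact mul_nonneg (Real.exp_pos _).le
          (Finset.prod_nonneg fun t _ => mul_nonneg (hp0 _) (Real.exp_pos _).le)
    _ = Real.exp (-lam * c) * (∑ a, p a * Real.exp (lam * f a)) ^ P := by
        rw [← Finset.mul_sum, Fintype.sum_pow (fun a => p a * Real.exp (lam * f a)) P]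

/-- Union bound for finite weighted sums. -/
lemma union_bound {α ι : Type*} [Fintype α] (w : α → ℝ) (hw : ∀ x, 0 ≤ w x)
    (E : α → Prop) [DecidablePred E] (s : Finset ι) (F : ι → α → Prop) [∀ i, DecidablePred (F i)]
    (h : ∀ x, E x → ∃ i ∈ s, F i x) :
    ∑ x ∈ Finset.univ.filter E, w x ≤ ∑ i ∈ s, ∑ x ∈ Finset.univ.filter (F i), w x := by
  classical
  have step1 : ∀ x ∈ Finset.univ.filter E, w x ≤ ∑ i ∈ s, if F i x then w x else 0 := by
    intro x hx
    obtain ⟨i, hi, hFi⟩ := h x (Finset.mem_filter.mp hx).2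
    calc w x = if F i x then w x else 0 := by rw [if_pos hFi]
      _ ≤ ∑ i ∈ s, if F i x then w x else 0 :=
        Finset.single_le_sum (f := fun i => if F i x then w x else 0)
          (fun j _ => by by_cases hj : F j x <;> simp [hj, hw x]) hi
  calc ∑ x ∈ Finset.univ.filter E, w x
      ≤ ∑ x ∈ Finset.univ.filter E, ∑ i ∈ s, if F i x then w x else 0 :=
        Finset.sum_le_sum step1
    _ ≤ ∑ x : α, ∑ i ∈ s, if F i x then w x else 0 := by
        apply Finset.sum_le_sum_of_subset_of_nonneg (Finset.filter_subset _ _)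
        intro x _ _
        apply Finset.sum_nonneg
        intro i _
        by_cases hj : F i x <;> simp [hj, hw x]
    _ = ∑ i ∈ s, ∑ x : α, if F i x then w x else 0 := Finset.sum_comm
    _ = ∑ i ∈ s, ∑ x ∈ Finset.univ.filter (F i), w x := by
        refine Finset.sum_congr rfl fun i _ => ?_
        rw [Finset.sum_filter]

lemma count_sum {q P : ℕ} (ω : Fin P → Fin q) (B : Finset (Fin q)) :
    ∑ a ∈ B, ((Finset.univ.filter (fun t => ω t = a)).card : ℝ)
      = ∑ t, (if ω t ∈ B then (1:ℝ) else 0) := by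
  classical
  have : ∀ a : Fin q, ((Finset.univ.filter (fun t => ω t = a)).card : ℝ)
      = ∑ t, (if ω t = a then (1:ℝ) else 0) := by
    intro a
    rw [Finset.card_filter]
    push_cast
    rfl
  simp_rw [this]
  rw [Finset.sum_comm]
  refine Finset.sum_congr rfl fun t _ => ?_
  simp [Finset.sum_ite_eq' B (ω t) (fun _ => (1:ℝ))]

lemma phat_sum {q P : ℕ} (hP : 1 ≤ P) (ω : Fin P → Fin q)
    (phat : (Fin P → Fin q) → Fin q → ℝ)
    (hphat : ∀ ω a, phat ω a = ((Finset.univ.filter (fun t => ω t = a)).card : ℝ) / P)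
    (B : Finset (Fin q)) :
    (∑ a ∈ B, phat ω a) * P = ∑ t, (if ω t ∈ B then (1:ℝ) else 0) := by
  have hP0 : (0:ℝ) < P := by exact_mod_cast hP
  simp_rw [hphat]
  rw [← Finset.sum_div, div_mul_cancel₀ _ hP0.ne', count_sum]

lemma phat_total {q P : ℕ} (hP : 1 ≤ P) (ω : Fin P → Fin q)
    (phat : (Fin P → Fin q) → Fin q → ℝ)
    (hphat : ∀ ω a, phat ω a = ((Finset.univ.filter (fun t => ω t = a)).card : ℝ) / P) :
    ∑ a, phat ω a = 1 := by
  have hP0 : (0:ℝ) < P := by exact_mod_cast hP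
  have := phat_sum hP ω phat hphat Finset.univ
  simp only [Finset.mem_univ, if_true, Finset.sum_const, Finset.card_univ,
    Fintype.card_fin, nsmul_eq_mul, mul_one] at this
  field_simp at this ⊢
  linarith

lemma incl1 {q P : ℕ} (hP : 1 ≤ P) (p : Fin q → ℝ) (hp1 : ∑ a, p a = 1) (ε : ℝ) (hε : 0 < ε)
    (phat : (Fin P → Fin q) → Fin q → ℝ)
    (hphat : ∀ ω a, phat ω a = ((Finset.univ.filter (fun t => ω t = a)).card : ℝ) / P)
    (ω : Fin P → Fin q) (hev : ε ≤ Real.sqrt (∑ a, (p a - phat ω a) ^ 2)) :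
    ∃ B : Finset (Fin q),
      (∑ a ∈ B, p a + ε / Real.sqrt 2) * P ≤ ∑ t, (if ω t ∈ B then (1:ℝ) else 0) := by
  classical
  have hP0 : (0:ℝ) < P := by exact_mod_cast hP
  set B : Finset (Fin q) := Finset.univ.filter (fun a => p a ≤ phat ω a) with hB
  refine ⟨B, ?_⟩
  set x : Fin q → ℝ := fun a => phat ω a - p a with hx
  have hsq : ε ^ 2 ≤ ∑ a, x a ^ 2 := by
    have h0 : (0:ℝ) ≤ ∑ a, (p a - phat ω a) ^ 2 := Finset.sum_nonneg fun a _ => sq_nonneg _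
    have := (Real.le_sqrt hε.le h0).mp hev
    calc ε ^ 2 ≤ ∑ a, (p a - phat ω a) ^ 2 := this
      _ = ∑ a, x a ^ 2 := by refine Finset.sum_congr rfl fun a _ => ?_; rw [hx]; ring
  set T : ℝ := ∑ a ∈ B, x a with hT
  have hT0 : 0 ≤ T := Finset.sum_nonneg fun a ha => by
    have := (Finset.mem_filter.mp ha).2; simp [hx]; linarith
  have h1 : ∑ a ∈ B, x a ^ 2 ≤ T ^ 2 :=
    Finset.sum_sq_le_sq_sum_of_nonneg fun a ha => by
      have := (Finset.mem_filter.mp ha).2; simp [hx]; linarith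
  have hxtot : ∑ a, x a = 0 := by
    have h2 := phat_total hP ω phat hphat
    simp only [hx, Finset.sum_sub_distrib]
    rw [h2, hp1]
    ring
  have hcompl : ∑ a ∈ Finset.univ.filter (fun a => ¬ (p a ≤ phat ω a)), (- x a) = T := by
    have := Finset.sum_filter_add_sum_filter_not Finset.univ (fun a => p a ≤ phat ω a) x
    rw [hxtot] at this
    rw [Finset.sum_neg_distrib]
    simp only [hT, hB]
    linarith
  have h2 : ∑ a ∈ Finset.univ.filter (fun a => ¬ (p a ≤ phat ω a)), x a ^ 2 ≤ T ^ 2 := by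
    have h3 : ∑ a ∈ Finset.univ.filter (fun a => ¬ (p a ≤ phat ω a)), (- x a) ^ 2 ≤ T ^ 2 := by
      rw [← hcompl]
      exact Finset.sum_sq_le_sq_sum_of_nonneg fun a ha => by
        have := (Finset.mem_filter.mp ha).2; simp [hx]; linarith
    simpa using h3
  have hsplit : ∑ a, x a ^ 2 = ∑ a ∈ B, x a ^ 2
      + ∑ a ∈ Finset.univ.filter (fun a => ¬ (p a ≤ phat ω a)), x a ^ 2 := by
    rw [hB]
    exact (Finset.sum_filter_add_sum_filter_not Finset.univ _ _).symm
  have hδT : ε / Real.sqrt 2 ≤ T := by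
    have hs2 : Real.sqrt 2 > 0 := by positivity
    have hs2sq : (Real.sqrt 2) ^ 2 = 2 := Real.sq_sqrt (by norm_num)
    have hεT : ε ^ 2 ≤ 2 * T ^ 2 := by linarith
    rw [div_le_iff₀ hs2]
    nlinarith [hεT, hs2sq, hT0, hε.le, sq_nonneg (ε - T * Real.sqrt 2),
      sq_nonneg (ε + T * Real.sqrt 2), mul_nonneg hT0 hs2.le]
  -- conclude
  have hkey : ∑ a ∈ B, p a + ε / Real.sqrt 2 ≤ ∑ a ∈ B, phat ω a := by
    have : ∑ a ∈ B, phat ω a - ∑ a ∈ B, p a = T := by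
      rw [hT, hx, Finset.sum_sub_distrib]
    linarith
  have := phat_sum hP ω phat hphat B
  calc (∑ a ∈ B, p a + ε / Real.sqrt 2) * P ≤ (∑ a ∈ B, phat ω a) * P := by
        apply mul_le_mul_of_nonneg_right hkey hP0.le
    _ = ∑ t, (if ω t ∈ B then (1:ℝ) else 0) := this
lemma perB {q P : ℕ} (p : Fin q → ℝ) (hp0 : ∀ a, 0 ≤ p a) (hp1 : ∑ a, p a = 1)
    (ε : ℝ) (hε : 0 < ε) (B : Finset (Fin q)) :
    ∑ ω ∈ Finset.univ.filter (fun ω : Fin P → Fin q =>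
        (∑ a ∈ B, p a + ε / Real.sqrt 2) * P ≤ ∑ t, (if ω t ∈ B then (1:ℝ) else 0)),
      ∏ t, p (ω t)
    ≤ Real.exp (-(ε ^ 2) * P / 2) := by
  classical
  set δ : ℝ := ε / Real.sqrt 2 with hδ
  have hδ0 : 0 < δ := by positivity
  have hδsq : δ ^ 2 = ε ^ 2 / 2 := by
    rw [hδ, div_pow, Real.sq_sqrt (by norm_num : (2:ℝ) ≥ 0)]
  set lam : ℝ := 2 * δ with hlam
  have hlam0 : 0 ≤ lam := by positivity
  set r : ℝ := ∑ a ∈ B, p a with hr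
  have hr0 : 0 ≤ r := Finset.sum_nonneg fun a _ => hp0 a
  have hr1 : r ≤ 1 := by
    rw [hr, ← hp1]
    exact Finset.sum_le_sum_of_subset_of_nonneg (Finset.subset_univ B) fun a _ _ => hp0 a
  have hmgf : ∑ a, p a * Real.exp (lam * (if a ∈ B then (1:ℝ) else 0))
      = 1 - r + r * Real.exp lam := by
    have : ∀ a : Fin q, p a * Real.exp (lam * (if a ∈ B then (1:ℝ) else 0))
        = (if a ∈ B then p a * Real.exp lam else p a) := by
      intro a
      by_cases h : a ∈ B <;> simp [h]
    simp_rw [this]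
    rw [Finset.sum_ite, ← Finset.sum_mul]
    have e1 : Finset.univ.filter (fun a => a ∈ B) = B := by
      ext a; simp
    have e2 : ∑ a ∈ Finset.univ.filter (fun a => a ∉ B), p a = 1 - r := by
      have h := Finset.sum_filter_add_sum_filter_not Finset.univ (fun a => a ∈ B) p
      rw [e1, hp1] at h
      rw [hr]
      linarith
    rw [e1, e2]
    ring
  have hch := chernoff (P := P) p hp0 (fun a => if a ∈ B then (1:ℝ) else 0)
    ((r + δ) * P) lam hlam0
  simp only [hmgf] at hch
  have hpow : (1 - r + r * Real.exp lam) ^ P ≤ Real.exp (lam * r + lam ^ 2 / 4) ^ P := by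
    apply pow_le_pow_left₀ _ (bern_mgf hr0 hr1 hlam0)
    nlinarith [Real.exp_pos lam, mul_nonneg hr0 (Real.exp_pos lam).le]
  have hfinal : Real.exp (-lam * ((r + δ) * P)) * Real.exp (lam * r + lam ^ 2 / 4) ^ P
      = Real.exp (-(ε ^ 2) * P / 2) := by
    rw [← Real.exp_nat_mul, ← Real.exp_add]
    congr 1
    have h1 : -lam * ((r + δ) * (P:ℝ)) + (P:ℝ) * (lam * r + lam ^ 2 / 4)
        = -(δ ^ 2) * P := by rw [hlam]; ring
    rw [h1, hδsq]
    ring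
  calc ∑ ω ∈ Finset.univ.filter (fun ω : Fin P → Fin q =>
        (∑ a ∈ B, p a + δ) * P ≤ ∑ t, (if ω t ∈ B then (1:ℝ) else 0)), ∏ t, p (ω t)
      ≤ Real.exp (-lam * ((r + δ) * P)) * (1 - r + r * Real.exp lam) ^ P := hch
    _ ≤ Real.exp (-lam * ((r + δ) * P)) * Real.exp (lam * r + lam ^ 2 / 4) ^ P :=
        mul_le_mul_of_nonneg_left hpow (Real.exp_pos _).le
    _ = Real.exp (-(ε ^ 2) * P / 2) := hfinal
lemma perA {q P : ℕ} (p : Fin q → ℝ) (hp0 : ∀ a, 0 ≤ p a) (hp1 : ∑ a, p a = 1)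
    (ε : ℝ) (hε : 0 < ε) (hε1 : ε ≤ 1) (a z : Fin q) (hgap : ε ≤ p z - p a) :
    ∑ ω ∈ Finset.univ.filter (fun ω : Fin P → Fin q =>
        (0:ℝ) ≤ ∑ t, ((if ω t = a then (1:ℝ) else 0) - (if ω t = z then (1:ℝ) else 0))),
      ∏ t, p (ω t)
    ≤ Real.exp (-(ε ^ 2) * P / 4) := by
  classical
  set lam : ℝ := ε / 2 with hlam
  have hlam0 : 0 ≤ lam := by positivity
  set f : Fin q → ℝ := fun x => (if x = a then (1:ℝ) else 0) - (if x = z then (1:ℝ) else 0)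
    with hf
  have hch := chernoff (P := P) p hp0 f 0 lam hlam0
  have hμ : ∑ x, p x * f x = p a - p z := by
    simp only [hf, mul_sub, mul_ite, mul_one, mul_zero, Finset.sum_sub_distrib]
    rw [Finset.sum_ite_eq' Finset.univ a p, Finset.sum_ite_eq' Finset.univ z p]
    simp
  have hmgf : ∑ x, p x * Real.exp (lam * f x) ≤ Real.exp (-(ε ^ 2) / 4) := by
    have hpt : ∀ x, Real.exp (lam * f x) ≤ 1 + lam * f x + lam ^ 2 := by
      intro x
      have hfx : |f x| ≤ 1 := by
        simp only [hf]
        split_ifs <;> norm_num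
      have habs : |lam * f x| ≤ 1 := by
        rw [abs_mul, abs_of_nonneg hlam0]
        calc lam * |f x| ≤ 1 * 1 := by
              apply mul_le_mul _ hfx (abs_nonneg _) (by norm_num)
              rw [hlam]; linarith
          _ = 1 := by norm_num
      have := Real.abs_exp_sub_one_sub_id_le habs
      have hfx2 : f x ^ 2 ≤ 1 := by
        rw [← sq_abs]
        nlinarith [abs_nonneg (f x)]
      have h2 : (lam * f x) ^ 2 ≤ lam ^ 2 := by
        rw [mul_pow]
        nlinarith [sq_nonneg lam]
      have h3 : Real.exp (lam * f x) - 1 - lam * f x ≤ (lam * f x) ^ 2 :=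
        le_trans (le_abs_self _) this
      linarith
    calc ∑ x, p x * Real.exp (lam * f x) ≤ ∑ x, p x * (1 + lam * f x + lam ^ 2) :=
          Finset.sum_le_sum fun x _ => mul_le_mul_of_nonneg_left (hpt x) (hp0 x)
      _ = 1 + lam * (p a - p z) + lam ^ 2 := by
          have hrw : ∀ x, p x * (1 + lam * f x + lam ^ 2)
              = p x + lam * (p x * f x) + lam ^ 2 * p x := fun x => by ring
          simp_rw [hrw, Finset.sum_add_distrib, ← Finset.mul_sum, hp1, hμ]
          ring
      _ ≤ 1 + (-(ε ^ 2) / 4) := by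
          have : lam * (p a - p z) ≤ -(ε * lam) := by
            have : p a - p z ≤ -ε := by linarith
            nlinarith
          rw [hlam] at *
          nlinarith
      _ ≤ Real.exp (-(ε ^ 2) / 4) := by linarith [Real.add_one_le_exp (-(ε ^ 2) / 4)]
  have hpow : (∑ x, p x * Real.exp (lam * f x)) ^ P ≤ Real.exp (-(ε ^ 2) / 4) ^ P := by
    apply pow_le_pow_left₀ _ hmgf
    exact Finset.sum_nonneg fun x _ => mul_nonneg (hp0 x) (Real.exp_pos _).le
  calc ∑ ω ∈ Finset.univ.filter (fun ω : Fin P → Fin q => (0:ℝ) ≤ ∑ t, f (ω t)), ∏ t, p (ω t)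
      ≤ Real.exp (-lam * 0) * (∑ x, p x * Real.exp (lam * f x)) ^ P := hch
    _ ≤ 1 * Real.exp (-(ε ^ 2) / 4) ^ P := by
        simp only [mul_zero, neg_zero, Real.exp_zero, one_mul]
        exact hpow
    _ = Real.exp (-(ε ^ 2) * P / 4) := by
        rw [one_mul, ← Real.exp_nat_mul]
        congr 1
        ring

lemma total_mass {q P : ℕ} (p : Fin q → ℝ) (hp0 : ∀ a, 0 ≤ p a) (hp1 : ∑ a, p a = 1)
    (E : (Fin P → Fin q) → Prop) [DecidablePred E] :
    ∑ ω ∈ Finset.univ.filter E, ∏ t, p (ω t) ≤ 1 := by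
  calc ∑ ω ∈ Finset.univ.filter E, ∏ t, p (ω t)
      ≤ ∑ ω : Fin P → Fin q, ∏ t, p (ω t) :=
        Finset.sum_le_sum_of_subset_of_nonneg (Finset.filter_subset _ _)
          (fun ω _ _ => Finset.prod_nonneg fun t _ => hp0 _)
    _ = (∑ a, p a) ^ P := (Fintype.sum_pow p P).symm
    _ = 1 := by rw [hp1, one_pow]

lemma trivial_rhs {q : ℕ} (hq : 2 ≤ q) {S : ℝ} (hS : S ≤ 2 * q * Real.log 2) :
    (1:ℝ) ≤ 2 * Real.exp (-S / (2 * q)) := by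
  have hq0 : (0:ℝ) < 2 * q := by positivity
  have h1 : -Real.log 2 ≤ -S / (2 * q) := by
    rw [neg_div, neg_le_neg_iff, div_le_iff₀ hq0]
    linarith
  calc (1:ℝ) = 2 * Real.exp (-Real.log 2) := by
        rw [Real.exp_neg, Real.exp_log (by norm_num : (0:ℝ) < 2)]; norm_num
    _ ≤ 2 * Real.exp (-S / (2 * q)) := by
        have := Real.exp_le_exp.mpr h1
        linarith

lemma tail1 {q : ℕ} (hq : 2 ≤ q) {S : ℝ} (hS : 2 * q * Real.log 2 ≤ S) :
    (2:ℝ) ^ q * Real.exp (-S / 2) ≤ 2 * Real.exp (-S / (2 * q)) := by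
  have hq' : (2:ℝ) ≤ q := by exact_mod_cast hq
  have hq0 : (0:ℝ) < 2 * q := by positivity
  have hl2 : (0:ℝ) < Real.log 2 := Real.log_pos (by norm_num)
  have h2q : (2:ℝ) ^ q = Real.exp ((q:ℝ) * Real.log 2) := by
    rw [Real.exp_nat_mul, Real.exp_log (by norm_num : (0:ℝ) < 2)]
  have hrhs : 2 * Real.exp (-S / (2 * q)) = Real.exp (Real.log 2 + -S / (2 * q)) := by
    rw [Real.exp_add, Real.exp_log (by norm_num : (0:ℝ) < 2)]
  rw [h2q, ← Real.exp_add, hrhs]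
  apply Real.exp_le_exp.mpr
  rw [neg_div, neg_div]
  set c : ℝ := S / (2 * q) with hcdef
  have hc : Real.log 2 ≤ c := by rw [hcdef, le_div_iff₀ hq0]; linarith
  have hcS : c * (2 * q) = S := div_mul_cancel₀ _ hq0.ne'
  rw [← hcS]
  have hkey : 0 ≤ ((q:ℝ) - 1) * (c - Real.log 2) :=
    mul_nonneg (by linarith) (by linarith)
  nlinarith [hkey]

lemma sq_le_two_pow (m : ℕ) : m ^ 2 ≤ 2 ^ (m + 1) := by
  rcases lt_or_ge m 4 with h | h
  · interval_cases m <;> norm_num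
  · induction m, h using Nat.le_induction with
    | base => norm_num
    | succ n hn ih =>
      have h2 : 2 * n + 1 ≤ n ^ 2 := by nlinarith
      calc (n + 1) ^ 2 = n ^ 2 + (2 * n + 1) := by ring
        _ ≤ 2 * n ^ 2 := by omega
        _ ≤ 2 * 2 ^ (n + 1) := by omega
        _ = 2 ^ (n + 1 + 1) := by ring

lemma tail2 {q : ℕ} (hq : 2 ≤ q) {S : ℝ} (hS : 2 * q * Real.log 2 ≤ S) :
    ((q:ℝ) - 1) * Real.exp (-S / 4) ≤ 2 * Real.exp (-S / (2 * q)) := by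
  have hq' : (2:ℝ) ≤ q := by exact_mod_cast hq
  have hq0 : (0:ℝ) < 2 * q := by positivity
  have hl2 : (0:ℝ) < Real.log 2 := Real.log_pos (by norm_num)
  set l : ℝ := Real.log 2 with hl
  have hsqnat : ((q:ℝ) - 1) ^ 2 ≤ (2:ℝ) ^ q := by
    have h1 : (q - 1) ^ 2 ≤ 2 ^ q := by
      have := sq_le_two_pow (q - 1)
      have hq1 : q - 1 + 1 = q := by omega
      rwa [hq1] at this
    have h2 : (((q - 1 : ℕ)):ℝ) = (q:ℝ) - 1 := by
      rw [Nat.cast_sub (by omega : 1 ≤ q)]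
      norm_num
    calc ((q:ℝ) - 1) ^ 2 = (((q - 1 : ℕ)):ℝ) ^ 2 := by rw [h2]
      _ ≤ (2:ℝ) ^ q := by exact_mod_cast h1
  have hcast : ((q:ℝ) - 2) = ((q - 2 : ℕ):ℝ) := by
    rw [Nat.cast_sub hq]
    norm_num
  set R : ℝ := 2 * Real.exp (l * ((q:ℝ) - 2) / 2) with hR
  have hR0 : (0:ℝ) < R := by positivity
  have hRsq : R ^ 2 = (2:ℝ) ^ q := by
    have e1 : Real.exp (l * ((q:ℝ) - 2) / 2) ^ 2 = Real.exp (l * ((q:ℝ) - 2)) := by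
      rw [← Real.exp_nat_mul]
      congr 1
      push_cast
      ring
    have e2 : Real.exp (l * ((q:ℝ) - 2)) = (2:ℝ) ^ (q - 2 : ℕ) := by
      rw [hcast, mul_comm, Real.exp_nat_mul, hl, Real.exp_log (by norm_num : (0:ℝ) < 2)]
    have e3 : 2 + (q - 2) = q := by omega
    rw [hR, mul_pow, e1, e2]
    rw [show ((2:ℝ)^2 = 2^(2:ℕ)) from by norm_num, ← pow_add, e3]
  have hqR : (q:ℝ) - 1 ≤ R := by
    nlinarith [hsqnat, hRsq, hR0, hq', sq_nonneg ((q:ℝ) - 1 - R), sq_nonneg ((q:ℝ) - 1 + R)]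
  have hexp : l * ((q:ℝ) - 2) / 2 + -S / 4 ≤ -S / (2 * q) := by
    rw [neg_div, neg_div]
    set c : ℝ := S / (2 * q) with hcdef
    have hc : l ≤ c := by rw [hcdef, le_div_iff₀ hq0]; linarith
    have hcS : c * (2 * q) = S := div_mul_cancel₀ _ hq0.ne'
    rw [← hcS]
    have hkey : 0 ≤ (c - l) * ((q:ℝ) - 2) :=
      mul_nonneg (by linarith) (by linarith)
    nlinarith [hkey]
  calc ((q:ℝ) - 1) * Real.exp (-S / 4) ≤ R * Real.exp (-S / 4) :=
        mul_le_mul_of_nonneg_right hqR (Real.exp_pos _).le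
    _ = 2 * Real.exp (l * ((q:ℝ) - 2) / 2 + -S / 4) := by
        rw [hR, mul_assoc, ← Real.exp_add]
    _ ≤ 2 * Real.exp (-S / (2 * q)) := by
        have := Real.exp_le_exp.mpr hexp
        linarith

/-- Multinomial concentration: for `P` i.i.d. samples from a distribution `p` on a `q`-ary
alphabet, the empirical distribution `p̂` satisfies
`Pr(‖p − p̂‖₂ ≥ ε) ≤ 2 exp(−ε² P/(2q))`; consequently, if `p_0` exceeds every other
`p_i` by at least `ε`, the empirical mode fails to be `0` with the same probability. -/
theorem stmt_17 (q : ℕ) (hq : 2 ≤ q) (P : ℕ) (hP : 1 ≤ P)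
    (p : Fin q → ℝ) (hp0 : ∀ a, 0 ≤ p a) (hp1 : ∑ a, p a = 1)
    (ε : ℝ) (hε : 0 < ε)
    (phat : (Fin P → Fin q) → Fin q → ℝ)
    (hphat : ∀ ω a, phat ω a = ((Finset.univ.filter (fun t => ω t = a)).card : ℝ) / P) :
    (∑ ω ∈ Finset.univ.filter (fun ω : Fin P → Fin q =>
          ε ≤ Real.sqrt (∑ a, (p a - phat ω a) ^ 2)), ∏ t, p (ω t))
      ≤ 2 * Real.exp (-(ε ^ 2) * P / (2 * q))
    ∧ ((∀ i : Fin q, i ≠ ⟨0, by omega⟩ → ε ≤ p ⟨0, by omega⟩ - p i) →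
        (∑ ω ∈ Finset.univ.filter (fun ω : Fin P → Fin q =>
            ∃ a : Fin q, a ≠ ⟨0, by omega⟩ ∧ phat ω ⟨0, by omega⟩ ≤ phat ω a),
          ∏ t, p (ω t))
        ≤ 2 * Real.exp (-(ε ^ 2) * P / (2 * q))) := by
  have hgoal_eq : -(ε ^ 2) * (P:ℝ) / (2 * (q:ℝ)) = -(ε ^ 2 * P) / (2 * q) := by ring
  have hS0 : 0 ≤ ε ^ 2 * (P:ℝ) := by positivity
  constructor
  · -- part 1
    rw [hgoal_eq]
    by_cases hcase : ε ^ 2 * (P:ℝ) ≤ 2 * q * Real.log 2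
    · calc (∑ ω ∈ Finset.univ.filter (fun ω : Fin P → Fin q =>
            ε ≤ Real.sqrt (∑ a, (p a - phat ω a) ^ 2)), ∏ t, p (ω t))
          ≤ 1 := total_mass p hp0 hp1 _
        _ ≤ 2 * Real.exp (-(ε ^ 2 * P) / (2 * q)) := trivial_rhs hq hcase
    · push_neg at hcase
      have hunion := union_bound (w := fun ω : Fin P → Fin q => ∏ t, p (ω t))
        (fun ω => Finset.prod_nonneg fun t _ => hp0 _)
        (E := fun ω => ε ≤ Real.sqrt (∑ a, (p a - phat ω a) ^ 2))
        (s := (Finset.univ : Finset (Finset (Fin q))))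
        (F := fun B ω => (∑ a ∈ B, p a + ε / Real.sqrt 2) * P
          ≤ ∑ t, (if ω t ∈ B then (1:ℝ) else 0))
        (fun ω hω => by
          obtain ⟨B, hB⟩ := incl1 hP p hp1 ε hε phat hphat ω hω
          exact ⟨B, Finset.mem_univ B, hB⟩)
      calc (∑ ω ∈ Finset.univ.filter (fun ω : Fin P → Fin q =>
            ε ≤ Real.sqrt (∑ a, (p a - phat ω a) ^ 2)), ∏ t, p (ω t))
          ≤ ∑ B : Finset (Fin q), ∑ ω ∈ Finset.univ.filter
              (fun ω : Fin P → Fin q => (∑ a ∈ B, p a + ε / Real.sqrt 2) * P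
                ≤ ∑ t, (if ω t ∈ B then (1:ℝ) else 0)), ∏ t, p (ω t) := hunion
        _ ≤ ∑ _B : Finset (Fin q), Real.exp (-(ε ^ 2) * P / 2) :=
            Finset.sum_le_sum fun B _ => perB p hp0 hp1 ε hε B
        _ = (2:ℝ) ^ q * Real.exp (-(ε ^ 2 * P) / 2) := by
            rw [Finset.sum_const, Finset.card_univ, Fintype.card_finset, nsmul_eq_mul]
            push_cast
            rw [Fintype.card_fin]
            congr 1
            ring
        _ ≤ 2 * Real.exp (-(ε ^ 2 * P) / (2 * q)) := tail1 hq hcase.le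
  · -- part 2
    intro hmode
    rw [hgoal_eq]
    set z : Fin q := ⟨0, by omega⟩ with hz
    have hε1 : ε ≤ 1 := by
      have h1 := hmode ⟨1, by omega⟩ (by simp [hz, Fin.ext_iff])
      have hz1 : p z ≤ 1 := by
        rw [← hp1]
        exact Finset.single_le_sum (fun a _ => hp0 a) (Finset.mem_univ z)
      have := hp0 ⟨1, by omega⟩
      linarith
    by_cases hcase : ε ^ 2 * (P:ℝ) ≤ 2 * q * Real.log 2
    · calc (∑ ω ∈ Finset.univ.filter (fun ω : Fin P → Fin q =>
            ∃ a : Fin q, a ≠ z ∧ phat ω z ≤ phat ω a), ∏ t, p (ω t))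
          ≤ 1 := total_mass p hp0 hp1 _
        _ ≤ 2 * Real.exp (-(ε ^ 2 * P) / (2 * q)) := trivial_rhs hq hcase
    · push_neg at hcase
      have hP0 : (0:ℝ) < P := by exact_mod_cast hP
      have hcount : ∀ (ω : Fin P → Fin q) (b : Fin q),
          ∑ t, (if ω t = b then (1:ℝ) else 0)
            = ((Finset.univ.filter (fun t => ω t = b)).card : ℝ) := by
        intro ω b
        rw [Finset.card_filter]
        push_cast
        rfl
      have hunion := union_bound (w := fun ω : Fin P → Fin q => ∏ t, p (ω t))
        (fun ω => Finset.prod_nonneg fun t _ => hp0 _)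
        (E := fun ω => ∃ a : Fin q, a ≠ z ∧ phat ω z ≤ phat ω a)
        (s := Finset.univ.filter (fun a : Fin q => a ≠ z))
        (F := fun a ω => (0:ℝ) ≤ ∑ t, ((if ω t = a then (1:ℝ) else 0)
          - (if ω t = z then (1:ℝ) else 0)))
        (fun ω hω => by
          obtain ⟨a, haz, hle⟩ := hω
          refine ⟨a, by simp [haz], ?_⟩
          show (0:ℝ) ≤ ∑ t, ((if ω t = a then (1:ℝ) else 0)
            - (if ω t = z then (1:ℝ) else 0))
          rw [Finset.sum_sub_distrib, hcount, hcount, sub_nonneg]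
          rw [hphat, hphat] at hle
          exact (div_le_div_iff_of_pos_right hP0).mp hle)
      calc (∑ ω ∈ Finset.univ.filter (fun ω : Fin P → Fin q =>
            ∃ a : Fin q, a ≠ z ∧ phat ω z ≤ phat ω a), ∏ t, p (ω t))
          ≤ ∑ a ∈ Finset.univ.filter (fun a : Fin q => a ≠ z),
              ∑ ω ∈ Finset.univ.filter (fun ω : Fin P → Fin q =>
                (0:ℝ) ≤ ∑ t, ((if ω t = a then (1:ℝ) else 0)
                  - (if ω t = z then (1:ℝ) else 0))),
              ∏ t, p (ω t) := hunion
        _ ≤ ∑ a ∈ Finset.univ.filter (fun a : Fin q => a ≠ z),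
              Real.exp (-(ε ^ 2) * P / 4) :=
            Finset.sum_le_sum fun a ha => perA p hp0 hp1 ε hε hε1 a z
              (hmode a (Finset.mem_filter.mp ha).2)
        _ = ((q:ℝ) - 1) * Real.exp (-(ε ^ 2 * P) / 4) := by
            rw [Finset.sum_const, Finset.filter_ne',
              Finset.card_erase_of_mem (Finset.mem_univ z),
              Finset.card_univ, Fintype.card_fin, nsmul_eq_mul]
            rw [Nat.cast_sub (by omega : 1 ≤ q)]
            push_cast
            congr 1
            ring
        _ ≤ 2 * Real.exp (-(ε ^ 2 * P) / (2 * q)) := tail2 hq hcase.le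
end
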